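/- Let G be a prime graph and S ⊆ V(G). If S is not a clique, then the t-convex hull of S is V(G); if S is a clique, then the t-interval of S equals S ∪ {u ∉ S : |N(u) ∩ S| ≥ 2}. -/

import Mathlib

open Set

variable {V : Type*}

/-- `p` is a triangle path: a path with no edge joining vertices at index
distance greater than 2 along the path. -/
def TPath (G : SimpleGraph V) {u v : V} (p : G.Walk u v) : Prop :=
  p.IsPath ∧ ∀ i j : ℕ, i + 2 < j →
    ∀ (hi : i < p.support.length) (hj : j < p.support.length),
      ¬ G.Adj (p.support.get ⟨i, hi⟩) (p.support.get ⟨j, hj⟩)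

/-- `p` is a monophonic (induced) path: a path with no edge joining vertices at
index distance greater than 1 along the path. -/
def MPath (G : SimpleGraph V) {u v : V} (p : G.Walk u v) : Prop :=
  p.IsPath ∧ ∀ i j : ℕ, i + 1 < j →
    ∀ (hi : i < p.support.length) (hj : j < p.support.length),
      ¬ G.Adj (p.support.get ⟨i, hi⟩) (p.support.get ⟨j, hj⟩)

/-- `p` is a geodesic (shortest path). -/
def GPath (G : SimpleGraph V) {u v : V} (p : G.Walk u v) : Prop :=
  p.IsPath ∧ ∀ q : G.Walk u v, p.length ≤ q.length

/-- `S` is convex in the triangle path convexity. -/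
def TConvex (G : SimpleGraph V) (S : Set V) : Prop :=
  ∀ ⦃u v : V⦄, u ∈ S → v ∈ S → ∀ p : G.Walk u v, TPath G p → ∀ w ∈ p.support, w ∈ S

/-- `S` is convex in the monophonic convexity. -/
def MConvex (G : SimpleGraph V) (S : Set V) : Prop :=
  ∀ ⦃u v : V⦄, u ∈ S → v ∈ S → ∀ p : G.Walk u v, MPath G p → ∀ w ∈ p.support, w ∈ S

/-- `S` is convex in the geodetic convexity. -/
def GConvex (G : SimpleGraph V) (S : Set V) : Prop :=
  ∀ ⦃u v : V⦄, u ∈ S → v ∈ S → ∀ p : G.Walk u v, GPath G p → ∀ w ∈ p.support, w ∈ S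

/-- `S` is `P₃`-convex: no vertex outside `S` has two neighbours in `S`. -/
def P3Convex (G : SimpleGraph V) (S : Set V) : Prop :=
  ∀ w ∉ S, ∀ a ∈ S, ∀ b ∈ S, G.Adj w a → G.Adj w b → a = b

/-- The triangle path interval of `S`. -/
def TInterval (G : SimpleGraph V) (S : Set V) : Set V :=
  S ∪ {w | ∃ u ∈ S, ∃ v ∈ S, ∃ p : G.Walk u v, TPath G p ∧ w ∈ p.support}

/-- The monophonic interval of `S`. -/
def MInterval (G : SimpleGraph V) (S : Set V) : Set V :=
  S ∪ {w | ∃ u ∈ S, ∃ v ∈ S, ∃ p : G.Walk u v, MPath G p ∧ w ∈ p.support}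

/-- The geodetic interval of `S`. -/
def GInterval (G : SimpleGraph V) (S : Set V) : Set V :=
  S ∪ {w | ∃ u ∈ S, ∃ v ∈ S, ∃ p : G.Walk u v, GPath G p ∧ w ∈ p.support}

/-- The `P₃`-interval of `S`: `S` together with the vertices having at least two
neighbours in `S`. -/
def P3Interval (G : SimpleGraph V) (S : Set V) : Set V :=
  S ∪ {w | w ∉ S ∧ ∃ a ∈ S, ∃ b ∈ S, a ≠ b ∧ G.Adj w a ∧ G.Adj w b}

/-- The convex hull of `S` in the triangle path convexity. -/
def THull (G : SimpleGraph V) (S : Set V) : Set V :=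
  ⋂₀ {C : Set V | S ⊆ C ∧ TConvex G C}

/-- The convex hull of `S` in the monophonic convexity. -/
def MHull (G : SimpleGraph V) (S : Set V) : Set V :=
  ⋂₀ {C : Set V | S ⊆ C ∧ MConvex G C}

/-- The convex hull of `S` in the geodetic convexity. -/
def GHull (G : SimpleGraph V) (S : Set V) : Set V :=
  ⋂₀ {C : Set V | S ⊆ C ∧ GConvex G C}

/-- `K` separates the vertices `a` and `b`: both lie outside `K` and every walk
between them meets `K`. -/
def Separates (G : SimpleGraph V) (K : Set V) (a b : V) : Prop :=
  a ∉ K ∧ b ∉ K ∧ ∀ p : G.Walk a b, ∃ w ∈ p.support, w ∈ K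

/-- `K` is a separator of `G`. -/
def IsSeparator (G : SimpleGraph V) (K : Set V) : Prop :=
  ∃ a b : V, Separates G K a b

/-- `G` is prime: it has no clique separator. -/
def IsPrime (G : SimpleGraph V) : Prop :=
  ¬ ∃ C : Set V, G.IsClique C ∧ IsSeparator G C

/-- `K` is a minimal separator for `a` and `b`. -/
def IsMinSeparator (G : SimpleGraph V) (K : Set V) (a b : V) : Prop :=
  Separates G K a b ∧ ∀ K' : Set V, K' ⊂ K → ¬ Separates G K' a b

/-- `W` induces a maximal prime subgraph of `G`. -/
def IsMPSubgraph (G : SimpleGraph V) (W : Set V) : Prop :=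
  IsPrime (G.induce W) ∧ ∀ W' : Set V, W ⊆ W' → IsPrime (G.induce W') → W' = W

/-- `C` is the vertex set of a connected component of `G - S`. -/
def IsCompOf (G : SimpleGraph V) (S C : Set V) : Prop :=
  C.Nonempty ∧ C ∩ S = ∅ ∧
  (∀ x ∈ C, ∀ y ∈ C, ∃ p : G.Walk x y, ∀ w ∈ p.support, w ∈ C) ∧
  (∀ x ∈ C, ∀ y : V, y ∉ S → G.Adj x y → y ∈ C)


section AuxLemmas

variable {G : SimpleGraph V}

lemma aux_length_drop {u v : V} (p : G.Walk u v) (n : ℕ) :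
    (p.drop n).length = p.length - n := by
  induction p generalizing n with
  | nil => simp [SimpleGraph.Walk.drop]
  | cons h q ih =>
    cases n with
    | zero => simp [SimpleGraph.Walk.drop]
    | succ n => simpa [SimpleGraph.Walk.drop] using ih n

lemma aux_support_drop {u v : V} (p : G.Walk u v) (n : ℕ) :
    ∀ w ∈ (p.drop n).support, w ∈ p.support := by
  induction p generalizing n with
  | nil =>
    simp only [SimpleGraph.Walk.drop, SimpleGraph.Walk.support_nil, List.mem_cons]
    intro w hw
    simp at hw
    subst hw
    simp [SimpleGraph.Walk.getVert_of_length_le]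
  | cons h q ih =>
    cases n with
    | zero => simp [SimpleGraph.Walk.drop]
    | succ n =>
      intro w hw
      simp only [SimpleGraph.Walk.drop, SimpleGraph.Walk.support_copy] at hw
      exact List.mem_cons_of_mem _ (ih n w hw)

lemma aux_get_support {u v : V} (p : G.Walk u v) (i : ℕ) (hi : i < p.support.length) :
    p.support.get ⟨i, hi⟩ = p.getVert i := by
  induction p generalizing i with
  | nil =>
    simp only [SimpleGraph.Walk.support_nil, List.length_cons, List.length_nil] at hi
    interval_cases i
    rfl
  | cons h q ih =>
    cases i with
    | zero => rfl
    | succ i =>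
      simp only [SimpleGraph.Walk.support_cons] at hi ⊢
      simpa [SimpleGraph.Walk.getVert_cons_succ] using
        ih i (by simpa using Nat.lt_of_succ_lt_succ hi)

lemma aux_shortcut {u v : V} (p : G.Walk u v) {i j : ℕ} (hij : i < j) (hj : j ≤ p.length)
    (hadj : G.Adj (p.getVert i) (p.getVert j)) :
    ∃ q : G.Walk u v, q.length + j ≤ p.length + i + 1 ∧ ∀ w ∈ q.support, w ∈ p.support := by
  induction p generalizing i j with
  | nil => simp at hj; omega
  | cons h q ih =>
    cases i with
    | zero =>
      refine ⟨SimpleGraph.Walk.cons (by simpa using hadj)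
        ((SimpleGraph.Walk.cons h q).drop j), ?_, ?_⟩
      · have := aux_length_drop (SimpleGraph.Walk.cons h q) j
        simp only [SimpleGraph.Walk.length_cons] at *
        omega
      · intro w hw
        simp only [SimpleGraph.Walk.support_cons, List.mem_cons] at hw
        rcases hw with rfl | hw
        · simp
        · exact aux_support_drop _ j w hw
    | succ i =>
      cases j with
      | zero => omega
      | succ j =>
        simp only [SimpleGraph.Walk.getVert_cons_succ] at hadj
        obtain ⟨r, hr1, hr2⟩ := ih (i := i) (j := j) (by omega)
          (by simpa [SimpleGraph.Walk.length_cons] using hj) hadj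
        refine ⟨SimpleGraph.Walk.cons h r, ?_, ?_⟩
        · simp only [SimpleGraph.Walk.length_cons]; omega
        · intro w hw
          simp only [SimpleGraph.Walk.support_cons, List.mem_cons] at hw ⊢
          rcases hw with rfl | hw
          · left; rfl
          · right; exact hr2 w hw

/-- A walk of length two between distinct vertices is a t-path. -/
lemma aux_tpath_len2 {a u b : V} (hau : G.Adj a u) (hub : G.Adj u b) (hab : a ≠ b) :
    TPath G (SimpleGraph.Walk.cons hau (SimpleGraph.Walk.cons hub SimpleGraph.Walk.nil)) := by
  constructor
  · rw [SimpleGraph.Walk.isPath_def]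
    simp only [SimpleGraph.Walk.support_cons, SimpleGraph.Walk.support_nil]
    simp [hau.ne, hub.ne, hab]
  · intro i j hij hi hj
    simp only [SimpleGraph.Walk.support_cons, SimpleGraph.Walk.support_nil,
      List.length_cons, List.length_nil] at hj
    omega

end AuxLemmas

theorem stmt_18 [Fintype V] (G : SimpleGraph V) (hconn : G.Connected)
    (hprime : IsPrime G) (S : Set V) :
    (¬ G.IsClique S → THull G S = Set.univ) ∧
    (G.IsClique S →
      TInterval G S =
        S ∪ {u | u ∉ S ∧ ∃ a ∈ S, ∃ b ∈ S, a ≠ b ∧ G.Adj u a ∧ G.Adj u b}) := by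
  classical
  constructor
  · -- non-clique case: the hull is everything
    intro hnc
    rw [SimpleGraph.isClique_iff, Set.Pairwise] at hnc
    push_neg at hnc
    obtain ⟨a, ha, b, hb, hab, hnadjab⟩ := hnc
    by_contra hne
    have hzex : ∃ z, z ∉ THull G S := by
      by_contra h; push_neg at h; exact hne (Set.eq_univ_iff_forall.mpr h)
    obtain ⟨z, hz⟩ := hzex
    set C := THull G S with hCdef
    have hSC : S ⊆ C := fun s hs => Set.mem_sInter.mpr fun T hT => hT.1 hs
    have hCconv : TConvex G C := by
      intro u v hu hv p hp w hw
      exact Set.mem_sInter.mpr fun T hT =>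
        hT.2 (Set.mem_sInter.mp hu T hT) (Set.mem_sInter.mp hv T hT) p hp w hw
    set D : Set V := {y | ∃ p : G.Walk z y, ∀ w ∈ p.support, w ∉ C} with hDdef
    have hzD : z ∈ D := ⟨SimpleGraph.Walk.nil, by simpa using hz⟩
    have hDC : ∀ d ∈ D, d ∉ C := by
      rintro d ⟨p, hp⟩
      exact hp d p.end_mem_support
    have hDall : ∀ (y : V) (p : G.Walk z y), (∀ w ∈ p.support, w ∉ C) →
        ∀ w ∈ p.support, w ∈ D := by
      intro y p hp w hw
      exact ⟨p.takeUntil w hw,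
        fun t ht => hp t (SimpleGraph.Walk.support_takeUntil_subset p hw ht)⟩
    have hDcl : ∀ d ∈ D, ∀ y : V, y ∉ C → G.Adj d y → y ∈ D := by
      rintro d ⟨p, hp⟩ y hy hadjdy
      refine ⟨p.append (SimpleGraph.Walk.cons hadjdy SimpleGraph.Walk.nil), ?_⟩
      intro w hw
      rw [SimpleGraph.Walk.mem_support_append_iff] at hw
      rcases hw with hw | hw
      · exact hp w hw
      · simp only [SimpleGraph.Walk.support_cons, SimpleGraph.Walk.support_nil,
          List.mem_cons, List.not_mem_nil, or_false] at hw
        rcases hw with rfl | rfl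
        · exact hp _ p.end_mem_support
        · exact hy
    set K : Set V := {k | k ∈ C ∧ ∃ d ∈ D, G.Adj d k} with hKdef
    have hKC : K ⊆ C := fun k hk => hk.1
    have hKclique : G.IsClique K := by
      rw [SimpleGraph.isClique_iff]
      intro x hx y hy hxy
      by_contra hnxy
      obtain ⟨hxC, d1, hd1, hadj1⟩ := hx
      obtain ⟨hyC, d2, hd2, hadj2⟩ := hy
      obtain ⟨p1, hp1⟩ := hd1
      obtain ⟨p2, hp2⟩ := hd2
      have hQex : ∃ q : G.Walk x y, ∀ w ∈ q.support, w = x ∨ w = y ∨ w ∈ D := by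
        refine ⟨SimpleGraph.Walk.cons hadj1.symm
          ((p1.reverse.append p2).append (SimpleGraph.Walk.cons hadj2 SimpleGraph.Walk.nil)),
          ?_⟩
        intro w hw
        simp only [SimpleGraph.Walk.support_cons, List.mem_cons] at hw
        rcases hw with rfl | hw
        · left; rfl
        rw [SimpleGraph.Walk.mem_support_append_iff] at hw
        rcases hw with hw | hw
        · rw [SimpleGraph.Walk.mem_support_append_iff] at hw
          right; right
          rcases hw with hw | hw
          · rw [SimpleGraph.Walk.support_reverse, List.mem_reverse] at hw
            exact hDall d1 p1 hp1 w hw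
          · exact hDall d2 p2 hp2 w hw
        · simp only [SimpleGraph.Walk.support_cons, SimpleGraph.Walk.support_nil,
            List.mem_cons, List.not_mem_nil, or_false] at hw
          rcases hw with rfl | rfl
          · right; right; exact ⟨p2, hp2⟩
          · right; left; rfl
      have hEx : ∃ n : ℕ, ∃ q : G.Walk x y,
          (∀ w ∈ q.support, w = x ∨ w = y ∨ w ∈ D) ∧ q.length = n :=
        ⟨hQex.choose.length, hQex.choose, hQex.choose_spec, rfl⟩
      obtain ⟨q, hq, hqn⟩ := Nat.find_spec hEx
      set p := q.bypass with hpdef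
      have hpQ : ∀ w ∈ p.support, w = x ∨ w = y ∨ w ∈ D :=
        fun w hw => hq w (SimpleGraph.Walk.support_bypass_subset q hw)
      have hple : p.length ≤ Nat.find hEx := by
        calc p.length ≤ q.length := SimpleGraph.Walk.length_bypass_le q
        _ = Nat.find hEx := hqn
      have hpge : Nat.find hEx ≤ p.length := Nat.find_le ⟨p, hpQ, rfl⟩
      have hplen : p.length = Nat.find hEx := le_antisymm hple hpge
      have hsl : p.support.length = p.length + 1 := p.length_support
      have hTP : TPath G p := by
        refine ⟨q.bypass_isPath, ?_⟩
        intro i j hij hi hj hadjij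
        rw [aux_get_support, aux_get_support] at hadjij
        have hjlen : j ≤ p.length := by omega
        obtain ⟨r, hr1, hr2⟩ := aux_shortcut p (by omega : i < j) hjlen hadjij
        have hrQ : ∀ w ∈ r.support, w = x ∨ w = y ∨ w ∈ D := fun w hw => hpQ w (hr2 w hw)
        have hrge : Nat.find hEx ≤ r.length := Nat.find_le ⟨r, hrQ, rfl⟩
        omega
      have hall : ∀ w ∈ p.support, w ∈ C := hCconv hxC hyC p hTP
      have h2 : 2 ≤ p.length := by
        by_contra h
        push_neg at h
        interval_cases hl : p.length
        · exact hxy (SimpleGraph.Walk.eq_of_length_eq_zero hl)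
        · have := p.adj_getVert_succ (by omega : 0 < p.length)
          rw [p.getVert_zero] at this
          have h1 : p.getVert 1 = y := by
            have := p.getVert_length
            rwa [hl] at this
          rw [h1] at this
          exact hnxy this
      have hnd : p.support.Nodup := (SimpleGraph.Walk.isPath_def p).mp q.bypass_isPath
      have hv1D : p.getVert 1 ∈ D := by
        rcases hpQ (p.getVert 1)
            (SimpleGraph.Walk.mem_support_iff_exists_getVert.mpr ⟨1, rfl, by omega⟩) with
          h | h | h
        · exfalso
          have e1 : p.support.get ⟨1, by omega⟩ = p.getVert 1 := aux_get_support p 1 (by omega)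
          have e0 : p.support.get ⟨0, by omega⟩ = p.getVert 0 := aux_get_support p 0 (by omega)
          rw [p.getVert_zero] at e0
          have : (⟨1, by omega⟩ : Fin p.support.length) = ⟨0, by omega⟩ :=
            hnd.get_inj_iff.mp (by rw [e1, e0, h])
          simpa using this
        · exfalso
          have e1 : p.support.get ⟨1, by omega⟩ = p.getVert 1 := aux_get_support p 1 (by omega)
          have eL : p.support.get ⟨p.length, by omega⟩ = p.getVert p.length :=
            aux_get_support p p.length (by omega)
          rw [p.getVert_length] at eL
          have : (⟨1, by omega⟩ : Fin p.support.length) = ⟨p.length, by omega⟩ :=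
            hnd.get_inj_iff.mp (by rw [e1, eL, h])
          have := Fin.mk.injEq 1 (by omega : (1:ℕ) < p.support.length) p.length (by omega) ▸ this
          omega
        · exact h
      exact hDC _ hv1D
        (hall _ (SimpleGraph.Walk.mem_support_iff_exists_getVert.mpr ⟨1, rfl, by omega⟩))
    -- choose c ∈ C \ K
    have hcex : ∃ c, c ∈ C ∧ c ∉ K := by
      by_cases haK : a ∈ K
      · by_cases hbK : b ∈ K
        · exact absurd (hKclique haK hbK hab) hnadjab
        · exact ⟨b, hSC hb, hbK⟩
      · exact ⟨a, hSC ha, haK⟩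
    obtain ⟨c, hcC, hcK⟩ := hcex
    have hwalkK : ∀ (u w' : V) (q : G.Walk u w'), u ∈ D → w' ∉ D →
        ∃ t ∈ q.support, t ∈ K := by
      intro u w' q
      induction q with
      | nil => intro h1 h2; exact absurd h1 h2
      | cons hadj q' ih =>
        intro h1 h2
        rename_i u' v' w''
        by_cases hv : v' ∈ D
        · obtain ⟨t, ht1, ht2⟩ := ih hv h2
          exact ⟨t, by simp [SimpleGraph.Walk.support_cons, List.mem_cons_of_mem _ ht1], ht2⟩
        · have hvC : v' ∈ C := by
            by_contra hvC
            exact hv (hDcl u' h1 v' hvC hadj)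
          refine ⟨v', ?_, ⟨hvC, u', h1, hadj⟩⟩
          simp [SimpleGraph.Walk.support_cons, q'.start_mem_support]
    have hsep : Separates G K c z := by
      refine ⟨hcK, fun hzK => hz (hKC hzK), ?_⟩
      intro p
      obtain ⟨t, ht1, ht2⟩ := hwalkK z c p.reverse hzD (fun h => hDC c h hcC)
      rw [SimpleGraph.Walk.support_reverse, List.mem_reverse] at ht1
      exact ⟨t, ht1, ht2⟩
    exact hprime ⟨K, hKclique, c, z, hsep⟩
  · -- clique case
    intro hcl
    ext w
    simp only [TInterval, Set.mem_union, Set.mem_setOf_eq]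
    constructor
    · rintro (hw | ⟨u, hu, v, hv, p, hp, hwp⟩)
      · exact Or.inl hw
      by_cases hwS : w ∈ S
      · exact Or.inl hwS
      right
      refine ⟨hwS, ?_⟩
      rcases eq_or_ne u v with rfl | huv
      · exfalso
        rw [(SimpleGraph.Walk.isPath_iff_eq_nil (p := p)).mp hp.1] at hwp
        simp only [SimpleGraph.Walk.support_nil, List.mem_cons, List.not_mem_nil,
          or_false] at hwp
        exact hwS (hwp ▸ hu)
      have hadjuv : G.Adj u v := hcl hu hv huv
      have hsl : p.support.length = p.length + 1 := p.length_support
      have hlen : p.length ≤ 2 := by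
        by_contra h
        push_neg at h
        have e0 : p.support.get ⟨0, by omega⟩ = p.getVert 0 := aux_get_support p 0 (by omega)
        have eL : p.support.get ⟨p.length, by omega⟩ = p.getVert p.length :=
          aux_get_support p p.length (by omega)
        refine hp.2 0 p.length (by omega) (by omega) (by omega) ?_
        rw [e0, eL, p.getVert_zero, p.getVert_length]
        exact hadjuv
      obtain ⟨k, hk1, hk2⟩ := SimpleGraph.Walk.mem_support_iff_exists_getVert.mp hwp
      have hk0 : k ≠ 0 := by
        intro h
        rw [h, p.getVert_zero] at hk1
        exact hwS (hk1 ▸ hu)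
      have hkL : k ≠ p.length := by
        intro h
        rw [h, p.getVert_length] at hk1
        exact hwS (hk1 ▸ hv)
      have hk : k = 1 ∧ p.length = 2 := by
        rcases Nat.lt_or_ge p.length 1 with h | h
        · exfalso
          exact huv (SimpleGraph.Walk.eq_of_length_eq_zero (p := p) (by omega))
        · constructor <;> omega
      obtain ⟨rfl, hl2⟩ := hk
      have ha1 : G.Adj (p.getVert 0) (p.getVert 1) := p.adj_getVert_succ (by omega)
      have ha2 : G.Adj (p.getVert 1) (p.getVert 2) := p.adj_getVert_succ (by omega)
      rw [p.getVert_zero] at ha1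
      have hg2 : p.getVert 2 = v := by
        have := p.getVert_length
        rwa [hl2] at this
      rw [hg2] at ha2
      rw [hk1] at ha1 ha2
      exact ⟨u, hu, v, hv, huv, ha1.symm, ha2⟩
    · rintro (hw | ⟨hwS, a', ha', b', hb', hab', hwa, hwb⟩)
      · exact Or.inl hw
      right
      refine ⟨a', ha', b', hb',
        SimpleGraph.Walk.cons hwa.symm (SimpleGraph.Walk.cons hwb SimpleGraph.Walk.nil),
        aux_tpath_len2 hwa.symm hwb hab', ?_⟩
      simp [SimpleGraph.Walk.support_cons]
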